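/- Let X be a code over A with a^n ∈ X, let B = A \ {a}, and let w ∈ B(a*B)*. Define X_w = a*wa* ∩ [X* \ (a^n X* ∪ X* a^n)]. Then for any pair (i,j) with 0 ≤ i,j ≤ n−1, there exists at most one pair (r,v) with r ≡ i (mod n) and v ≡ j (mod n) such that a^r w a^v ∈ X_w. -/

import Mathlib

/-- The submonoid `X*` generated by a set of words `X`. -/
def starOf {A : Type*} (X : Set (List A)) : Set (List A) :=
  {u | ∃ l : List (List A), (∀ w ∈ l, w ∈ X) ∧ l.flatten = u}

/-- `X` is a code: unique factorization of words of `X*` into elements of `X`. -/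
def IsCode {A : Type*} (X : Set (List A)) : Prop :=
  ∀ l m : List (List A), (∀ w ∈ l, w ∈ X) → (∀ w ∈ m, w ∈ X) →
    l.flatten = m.flatten → l = m

/-- `X_w = a*wa* ∩ [X* \ (a^n X* ∪ X* a^n)]`. -/
def Xw {A : Type*} (X : Set (List A)) (a : A) (n : ℕ) (w : List A) : Set (List A) :=
  {x | (∃ r v : ℕ, x = List.replicate r a ++ w ++ List.replicate v a) ∧
    x ∈ starOf X ∧
    (¬∃ y ∈ starOf X, x = List.replicate n a ++ y) ∧
    (¬∃ y ∈ starOf X, x = y ++ List.replicate n a)}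

private lemma rep_cancel {α : Type*} (c : α) :
    ∀ (p p' : ℕ) (l l' : List α), l.head? ≠ some c → l'.head? ≠ some c →
      List.replicate p c ++ l = List.replicate p' c ++ l' → p = p' := by
  intro p
  induction p with
  | zero =>
    intro p' l l' h h' heq
    cases p' with
    | zero => rfl
    | succ q =>
      exfalso; apply h
      simp only [List.replicate_zero, List.nil_append, List.replicate_succ,
        List.cons_append] at heq
      rw [heq]; rfl
  | succ q ih =>
    intro p' l l' h h' heq
    cases p' with
    | zero =>
      exfalso; apply h'
      simp only [List.replicate_zero, List.nil_append, List.replicate_succ,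
        List.cons_append] at heq
      rw [← heq]; rfl
    | succ q' =>
      simp only [List.replicate_succ, List.cons_append, List.cons.injEq] at heq
      exact congrArg Nat.succ (ih q' l l' h h' heq.2)

private lemma flatten_rep {α : Type*} (n : ℕ) (a : α) (p : ℕ) :
    (List.replicate p (List.replicate n a)).flatten = List.replicate (p * n) a := by
  induction p with
  | zero => simp
  | succ q ih =>
    rw [List.replicate_succ, List.flatten_cons, ih, Nat.succ_mul, Nat.add_comm,
      List.replicate_add]

/-- Let `X` be a code with `a^n ∈ X` and let `w` be a nonempty word whose first and
last letters differ from `a`.  For any residues `i, j` mod `n` there is at most one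
pair `(r, v)` with `r ≡ i`, `v ≡ j (mod n)` and `a^r w a^v ∈ X_w`. -/
theorem Xw_unique_residues {A : Type*} (X : Set (List A)) (a : A) (n : ℕ)
    (hcode : IsCode X) (han : List.replicate n a ∈ X)
    (w : List A) (hw : w ≠ []) (hhead : w.head hw ≠ a) (hlast : w.getLast hw ≠ a) :
    ∀ r v r' v' : ℕ, r % n = r' % n → v % n = v' % n →
      List.replicate r a ++ w ++ List.replicate v a ∈ Xw X a n w →
      List.replicate r' a ++ w ++ List.replicate v' a ∈ Xw X a n w →
      r = r' ∧ v = v' := by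
  intro r v r' v' hr hv hx hx'
  rcases Nat.eq_zero_or_pos n with hn | hn
  · subst hn; simp only [Nat.mod_zero] at hr hv; exact ⟨hr, hv⟩
  set c : List A := List.replicate n a with hc
  obtain ⟨-, ⟨lx, hlxX, hlxf⟩, hxl, hxr⟩ := hx
  obtain ⟨-, ⟨lx', hlxX', hlxf'⟩, hxl', hxr'⟩ := hx'
  -- lx and lx' are nonempty
  have hwpos : 0 < w.length := List.length_pos_iff.mpr hw
  have hlxne : lx ≠ [] := by
    intro h; rw [h] at hlxf
    simp only [List.flatten_nil] at hlxf
    have := congrArg List.length hlxf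
    simp at this
    omega
  have hlxne' : lx' ≠ [] := by
    intro h; rw [h] at hlxf'
    simp only [List.flatten_nil] at hlxf'
    have := congrArg List.length hlxf'
    simp at this
    omega
  -- heads are not c, lasts are not c
  have hhd : lx.head? ≠ some c := by
    intro h
    obtain ⟨u, t, rfl⟩ : ∃ u t, lx = u :: t := by
      cases lx with
      | nil => exact absurd rfl hlxne
      | cons u t => exact ⟨u, t, rfl⟩
    simp only [List.head?_cons, Option.some.injEq] at h
    apply hxl
    refine ⟨t.flatten, ⟨t, fun u hu => hlxX u (List.mem_cons_of_mem _ hu), rfl⟩, ?_⟩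
    rw [← hlxf, List.flatten_cons, h, hc]
  have hhd' : lx'.head? ≠ some c := by
    intro h
    obtain ⟨u, t, rfl⟩ : ∃ u t, lx' = u :: t := by
      cases lx' with
      | nil => exact absurd rfl hlxne'
      | cons u t => exact ⟨u, t, rfl⟩
    simp only [List.head?_cons, Option.some.injEq] at h
    apply hxl'
    refine ⟨t.flatten, ⟨t, fun u hu => hlxX' u (List.mem_cons_of_mem _ hu), rfl⟩, ?_⟩
    rw [← hlxf', List.flatten_cons, h, hc]
  have hlt : lx.getLast? ≠ some c := by
    intro h
    have ht : lx = lx.dropLast ++ [c] := by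
      conv_lhs => rw [← List.dropLast_append_getLast hlxne]
      rw [List.getLast?_eq_getLast hlxne, Option.some.injEq] at h
      rw [h]
    apply hxr
    refine ⟨lx.dropLast.flatten, ⟨lx.dropLast, fun u hu => hlxX u (List.dropLast_subset _ hu), rfl⟩, ?_⟩
    rw [← hlxf]
    conv_lhs => rw [ht]
    rw [List.flatten_append, List.flatten_cons, List.flatten_nil, List.append_nil]
  have hlt' : lx'.getLast? ≠ some c := by
    intro h
    have ht : lx' = lx'.dropLast ++ [c] := by
      conv_lhs => rw [← List.dropLast_append_getLast hlxne']
      rw [List.getLast?_eq_getLast hlxne', Option.some.injEq] at h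
      rw [h]
    apply hxr'
    refine ⟨lx'.dropLast.flatten, ⟨lx'.dropLast, fun u hu => hlxX' u (List.dropLast_subset _ hu), rfl⟩, ?_⟩
    rw [← hlxf']
    conv_lhs => rw [ht]
    rw [List.flatten_append, List.flatten_cons, List.flatten_nil, List.append_nil]
  -- build the two factorizations of the common word
  set p := r' / n
  set p' := r / n
  set s := v' / n
  set s' := v / n
  set L1 : List (List A) := List.replicate p c ++ lx ++ List.replicate s c with hL1
  set L2 : List (List A) := List.replicate p' c ++ lx' ++ List.replicate s' c with hL2
  have hmem1 : ∀ u ∈ L1, u ∈ X := by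
    intro u hu
    rcases List.mem_append.mp hu with hu | hu
    · rcases List.mem_append.mp hu with hu | hu
      · rw [List.eq_of_mem_replicate hu]; exact han
      · exact hlxX u hu
    · rw [List.eq_of_mem_replicate hu]; exact han
  have hmem2 : ∀ u ∈ L2, u ∈ X := by
    intro u hu
    rcases List.mem_append.mp hu with hu | hu
    · rcases List.mem_append.mp hu with hu | hu
      · rw [List.eq_of_mem_replicate hu]; exact han
      · exact hlxX' u hu
    · rw [List.eq_of_mem_replicate hu]; exact han
  have key1 : p * n + r = p' * n + r' := by
    have h1 := Nat.div_add_mod' r n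
    have h2 := Nat.div_add_mod' r' n
    simp only [p, p']
    omega
  have key2 : v + s * n = v' + s' * n := by
    have h1 := Nat.div_add_mod' v n
    have h2 := Nat.div_add_mod' v' n
    simp only [s, s']
    omega
  have hflat : L1.flatten = L2.flatten := by
    rw [hL1, hL2, List.flatten_append, List.flatten_append, List.flatten_append,
      List.flatten_append, hlxf, hlxf', hc, flatten_rep, flatten_rep, flatten_rep,
      flatten_rep]
    calc List.replicate (p * n) a ++ (List.replicate r a ++ w ++ List.replicate v a)
          ++ List.replicate (s * n) a
        = List.replicate (p * n + r) a ++ w ++ List.replicate (v + s * n) a := by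
          simp only [List.replicate_add, List.append_assoc]
      _ = List.replicate (p' * n + r') a ++ w ++ List.replicate (v' + s' * n) a := by
          rw [key1, key2]
      _ = List.replicate (p' * n) a ++ (List.replicate r' a ++ w ++ List.replicate v' a)
          ++ List.replicate (s' * n) a := by
          simp only [List.replicate_add, List.append_assoc]
  have hLeq : L1 = L2 := hcode L1 L2 hmem1 hmem2 hflat
  -- extract p = p'
  rw [hL1, hL2, List.append_assoc, List.append_assoc] at hLeq
  have hp : p = p' := by
    refine rep_cancel c p p' _ _ ?_ ?_ hLeq
    · have he : (lx ++ List.replicate s c).head? = lx.head? := by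
        rw [List.head?_append, List.head?_eq_head hlxne]; rfl
      rw [he]; exact hhd
    · have he : (lx' ++ List.replicate s' c).head? = lx'.head? := by
        rw [List.head?_append, List.head?_eq_head hlxne']; rfl
      rw [he]; exact hhd'
  have htail : lx ++ List.replicate s c = lx' ++ List.replicate s' c := by
    rw [hp] at hLeq
    exact List.append_cancel_left hLeq
  have hs : s = s' := by
    have hrev := congrArg List.reverse htail
    rw [List.reverse_append, List.reverse_append, List.reverse_replicate,
      List.reverse_replicate] at hrev
    refine rep_cancel c s s' _ _ ?_ ?_ hrev
    · rw [List.head?_reverse]; exact hlt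
    · rw [List.head?_reverse]; exact hlt'
  constructor
  · have h1 := Nat.div_add_mod' r n
    have h2 := Nat.div_add_mod' r' n
    have h3 : p * n = p' * n := by rw [hp]
    simp only [p, p'] at h3
    omega
  · have h1 := Nat.div_add_mod' v n
    have h2 := Nat.div_add_mod' v' n
    have h3 : s * n = s' * n := by rw [hs]
    simp only [s, s'] at h3
    omega
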